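/- Let N ≥ 1 be an integer and let m_{2p} = ∫_ℝ x^{2p}·ρ_N(x) dx denote the even moments of the unscaled GUE eigenvalue density. Then m_0 = N, m_2 = N², and for every integer p ≥ 2, (p+1)·m_{2p} = (4p−2)·N·m_{2p−2} + (p−1)·(2p−1)·(2p−3)·m_{2p−4}. -/

import Mathlib

open Nat MeasureTheory

/-- The orthonormal Hermite functions' polynomial part:
`p_n(x) = He_n(x)/√(√(2π)·n!)`, orthonormal for the weight `e^{-x²/2}` on `ℝ`. -/
noncomputable def pOrtho (n : ℕ) (x : ℝ) : ℝ :=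
  Polynomial.aeval x (Polynomial.hermite n) /
    Real.sqrt (Real.sqrt (2 * Real.pi) * (n ! : ℝ))

/-- The (unscaled) GUE eigenvalue density
`ρ_N(x) = √N · e^{-x²/2} · (p_N'(x)p_{N-1}(x) − p_N(x)p_{N-1}'(x))`. -/
noncomputable def gueDensity (N : ℕ) (x : ℝ) : ℝ :=
  Real.sqrt N * Real.exp (-x ^ 2 / 2) *
    (deriv (pOrtho N) x * pOrtho (N - 1) x - pOrtho N x * deriv (pOrtho (N - 1)) x)

/-- The even moments `m_{2p} = ∫_ℝ x^{2p} ρ_N(x) dx` of the unscaled GUE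
eigenvalue density. -/
noncomputable def gueMoment (N p : ℕ) : ℝ :=
  ∫ x : ℝ, x ^ (2 * p) * gueDensity N x


open Polynomial Real Filter

namespace HZ

noncomputable def G (P : Polynomial ℝ) : ℝ → ℝ := fun x => Real.exp (-x ^ 2 / 2) * aeval x P

noncomputable def I (P : Polynomial ℝ) : ℝ := ∫ x : ℝ, G P x

noncomputable def gd (P : Polynomial ℝ) : Polynomial ℝ := derivative P - X * P

lemma integrable_pow_gauss (k : ℕ) :
    Integrable (fun x : ℝ => x ^ k * Real.exp (-x ^ 2 / 2)) := by
  have hg : Integrable (fun x : ℝ => ((k ! : ℝ) * Real.exp 1) * Real.exp (-(1/4 : ℝ) * x ^ 2)) :=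
    (integrable_exp_neg_mul_sq (by norm_num)).const_mul _
  refine hg.mono' (Continuous.aestronglyMeasurable (by continuity))
    (Filter.Eventually.of_forall fun x => ?_)
  rw [Real.norm_eq_abs, abs_mul, abs_pow, abs_of_pos (Real.exp_pos _)]
  have hk : (0:ℝ) < (k ! : ℝ) := by positivity
  have h1 : |x| ^ k ≤ (k ! : ℝ) * Real.exp |x| := by
    have h := Real.pow_div_factorial_le_exp (x := |x|) (abs_nonneg x) k
    calc |x| ^ k = (|x| ^ k / (k ! : ℝ)) * (k ! : ℝ) := by field_simp
      _ ≤ Real.exp |x| * (k ! : ℝ) := mul_le_mul_of_nonneg_right h hk.le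
      _ = (k ! : ℝ) * Real.exp |x| := by ring
  calc |x| ^ k * Real.exp (-x ^ 2 / 2)
      ≤ ((k ! : ℝ) * Real.exp |x|) * Real.exp (-x ^ 2 / 2) :=
        mul_le_mul_of_nonneg_right h1 (Real.exp_pos _).le
    _ = (k ! : ℝ) * Real.exp (|x| + -x ^ 2 / 2) := by rw [Real.exp_add]; ring
    _ ≤ (k ! : ℝ) * Real.exp (1 + -(1/4 : ℝ) * x ^ 2) := by
        have hx : |x| + -x ^ 2 / 2 ≤ 1 + -(1/4 : ℝ) * x ^ 2 := by
          nlinarith [sq_abs x, sq_nonneg (|x| - 2)]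
        exact mul_le_mul_of_nonneg_left (Real.exp_le_exp.2 hx) hk.le
    _ = ((k ! : ℝ) * Real.exp 1) * Real.exp (-(1/4 : ℝ) * x ^ 2) := by
        rw [Real.exp_add]; ring

lemma integrable_G (P : Polynomial ℝ) : Integrable (G P) := by
  induction P using Polynomial.induction_on' with
  | add p q hp hq =>
      have : G (p + q) = fun x => G p x + G q x := by
        funext x; simp [G, mul_add]
      rw [this]; exact hp.add hq
  | monomial k c =>
      have : G (monomial k c) = fun x => c * (x ^ k * Real.exp (-x ^ 2 / 2)) := by
        funext x; simp [G, aeval_monomial]; ring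
      rw [this]; exact (integrable_pow_gauss k).const_mul c

lemma hasDerivAt_G (P : Polynomial ℝ) (x : ℝ) : HasDerivAt (G P) (G (gd P) x) x := by
  have hp : HasDerivAt (fun x : ℝ => -x ^ 2 / 2) (-x) x := by
    have h := ((hasDerivAt_pow 2 x).neg.div_const 2)
    have e : -(((2 : ℕ) : ℝ) * x ^ (2 - 1)) / 2 = -x := by push_cast; ring
    rwa [e] at h
  have h1 : HasDerivAt (fun x : ℝ => Real.exp (-x ^ 2 / 2)) (-x * Real.exp (-x ^ 2 / 2)) x := by
    simpa [mul_comm] using hp.exp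
  have h2 : HasDerivAt (fun x : ℝ => aeval x P) (aeval x (derivative P)) x :=
    P.hasDerivAt_aeval x
  have := h1.mul h2
  refine this.congr_deriv ?_
  simp [G, gd]
  ring

lemma I_gd (P : Polynomial ℝ) : I (gd P) = 0 :=
  integral_eq_zero_of_hasDerivAt_of_integrable (hasDerivAt_G P) (integrable_G _) (integrable_G _)

lemma I_sub (P Q : Polynomial ℝ) : I (P - Q) = I P - I Q := by
  have : G (P - Q) = fun x => G P x - G Q x := by funext x; simp [G, mul_sub]
  rw [I, this, integral_sub (integrable_G P) (integrable_G Q)]; rfl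

lemma I_C_mul (a : ℝ) (P : Polynomial ℝ) : I (C a * P) = a * I P := by
  have : G (C a * P) = fun x => a * G P x := by funext x; simp [G]; ring
  rw [I, this, integral_const_mul]; rfl

lemma I_ibp (k : ℕ) (P : Polynomial ℝ) :
    I (X ^ (k + 1) * gd P) = -((k : ℝ) + 1) * I (X ^ k * P) := by
  have hpoly : X ^ (k + 1) * gd P = gd (X ^ (k + 1) * P) - C ((k : ℝ) + 1) * (X ^ k * P) := by
    simp only [gd, derivative_mul, derivative_X_pow, Nat.add_sub_cancel]
    push_cast
    ring
  rw [hpoly, I_sub, I_gd, I_C_mul]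
  ring


/-- Real Hermite polynomial. -/
noncomputable def Hr (n : ℕ) : Polynomial ℝ := (hermite n).map (algebraMap ℤ ℝ)

lemma aeval_Hr (n : ℕ) (x : ℝ) : aeval x (Hr n) = aeval x (hermite n) := by
  simp [Hr, aeval_def, eval₂_map, RingHom.id_comp]

lemma Hr_zero : Hr 0 = 1 := by simp [Hr]

lemma Hr_succ (n : ℕ) : Hr (n + 1) = X * Hr n - derivative (Hr n) := by
  simp [Hr, hermite_succ, Polynomial.derivative_map]

lemma derivative_hermite' (n : ℕ) :
    derivative (hermite n) = C (n : ℤ) * hermite (n - 1) := by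
  induction n using Nat.twoStepInduction with
  | zero => simp
  | one => simp [hermite_one]
  | more n ih1 ih2 =>
      rw [show n + 1 - 1 = n from rfl, show n + 2 - 1 = n + 1 from rfl] at *
      rw [hermite_succ (n + 1), derivative_sub, derivative_mul, derivative_X, one_mul, ih2,
        derivative_mul, derivative_C, zero_mul, zero_add, ih1]
      have hsucc : hermite (n + 1) = X * hermite n - C (n : ℤ) * hermite (n - 1) := by
        rw [hermite_succ, ih1]
      rw [hsucc]
      push_cast
      simp only [C_add, C_1, map_ofNat]
      ring

lemma derivative_Hr (n : ℕ) : derivative (Hr n) = C (n : ℝ) * Hr (n - 1) := by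
  have := congrArg (fun p => p.map (algebraMap ℤ ℝ)) (derivative_hermite' n)
  simpa [Hr, Polynomial.derivative_map, Polynomial.map_mul] using this

lemma natDegree_Hr (n : ℕ) : (Hr n).natDegree = n := by
  rw [Hr, (hermite_monic n).natDegree_map, natDegree_hermite]

lemma iterate_derivative_Hr_self (n : ℕ) : derivative^[n] (Hr n) = C (n ! : ℝ) := by
  induction n with
  | zero => simp [Hr_zero]
  | succ n ih =>
      rw [Function.iterate_succ_apply, derivative_Hr, show n + 1 - 1 = n from rfl]
      have : derivative^[n] (C ((n : ℝ) + 1) * Hr n) = C ((n : ℝ) + 1) * derivative^[n] (Hr n) := by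
        induction n with
        | zero => simp
        | succ m ihm => exact Polynomial.iterate_derivative_C_mul _ _ _
      push_cast
      rw [this, ih, ← C_mul]
      congr 1
      rw [Nat.factorial_succ]
      push_cast
      ring

lemma I_Hr_mul (m : ℕ) : ∀ P : Polynomial ℝ, I (Hr m * P) = I (derivative^[m] P) := by
  induction m with
  | zero => intro P; simp [Hr_zero]
  | succ m ih =>
      intro P
      have key : Hr (m + 1) * P = Hr m * derivative P - gd (Hr m * P) := by
        rw [Hr_succ, gd]
        simp only [derivative_mul]
        ring
      rw [key, I_sub, I_gd, sub_zero, ih (derivative P), ← Function.iterate_succ_apply]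

lemma I_one : I 1 = Real.sqrt (2 * π) := by
  have h := integral_gaussian (1/2 : ℝ)
  have : I 1 = ∫ x : ℝ, Real.exp (-(1/2 : ℝ) * x ^ 2) := by
    rw [I]
    congr 1
    funext x
    simp [G]
    ring_nf
  rw [this, h]
  rw [show π / (1/2 : ℝ) = 2 * π by ring]

lemma I_Hr_mul_self (n : ℕ) : I (Hr n * Hr n) = (n ! : ℝ) * Real.sqrt (2 * π) := by
  rw [I_Hr_mul, iterate_derivative_Hr_self]
  have : C ((n ! : ℝ)) = C ((n ! : ℝ)) * 1 := by ring
  rw [this, I_C_mul, I_one]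

lemma I_Hr_mul_Hr_of_lt {k m : ℕ} (h : k < m) : I (Hr m * Hr k) = 0 := by
  rw [I_Hr_mul, Polynomial.iterate_derivative_eq_zero (by rw [natDegree_Hr]; exact h)]
  simp [I, G]

/-- The Christoffel-Darboux-type polynomial. -/
noncomputable def Sp (n : ℕ) : Polynomial ℝ :=
  C ((n : ℝ) + 1) * (Hr n * Hr n) - X * (Hr (n + 1) * Hr n) + Hr (n + 1) * Hr (n + 1)

lemma derivative_Hr_succ (n : ℕ) : derivative (Hr (n + 1)) = C ((n : ℝ) + 1) * Hr n := by
  rw [derivative_Hr, show n + 1 - 1 = n from rfl]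
  push_cast
  ring_nf

lemma derivative_Hr_eq (n : ℕ) : derivative (Hr n) = X * Hr n - Hr (n + 1) := by
  rw [Hr_succ]; ring

lemma Sp_eq (n : ℕ) :
    Sp n = derivative (Hr (n + 1)) * Hr n - Hr (n + 1) * derivative (Hr n) := by
  rw [Sp, derivative_Hr_succ, derivative_Hr_eq]
  ring

/-- The third-order ODE satisfied by the GUE density, in polynomial form. -/
lemma ode (n : ℕ) :
    gd (gd (gd (Sp n))) + (C (4 * (n : ℝ) + 4) - X ^ 2) * gd (Sp n) + X * Sp n = 0 := by
  have hA : derivative (Hr (n + 1)) = C ((n : ℝ) + 1) * Hr n := derivative_Hr_succ n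
  have hB : derivative (Hr n) = X * Hr n - Hr (n + 1) := derivative_Hr_eq n
  simp only [Sp, gd, derivative_sub, derivative_add, derivative_mul, derivative_X,
    derivative_C, derivative_X_pow, hA, hB, derivative_one, derivative_zero, C_add, C_1, C_mul,
    map_ofNat]
  ring

lemma I_Sp (n : ℕ) : I (Sp n) = ((n + 1)! : ℝ) * Real.sqrt (2 * π) := by
  have hXB : X * Hr n = Hr (n + 1) + C ((n : ℝ)) * Hr (n - 1) := by
    rw [Hr_succ, derivative_Hr]; ring
  have hSp : Sp n = (C ((n : ℝ) + 1) * (Hr n * Hr n) + Hr (n + 1) * Hr (n + 1))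
      - (Hr (n + 1) * Hr (n + 1) + C ((n : ℝ)) * (Hr (n + 1) * Hr (n - 1))) := by
    rw [Sp, show X * (Hr (n + 1) * Hr n) = (X * Hr n) * Hr (n + 1) by ring, hXB]
    ring
  have hadd : ∀ P Q : Polynomial ℝ, I (P + Q) = I P + I Q := by
    intro P Q
    have : P + Q = P - (0 - Q) := by ring
    rw [this, I_sub, I_sub]
    have : I 0 = 0 := by simp [I, G]
    rw [this]; ring
  rw [hSp, I_sub, hadd, hadd, I_C_mul, I_C_mul, I_Hr_mul_self,
    I_Hr_mul_Hr_of_lt (Nat.sub_lt_succ n 1)]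
  rw [Nat.factorial_succ]
  push_cast
  ring



lemma aeval_derivative_Hr (m : ℕ) (x : ℝ) :
    aeval x (derivative (Hr m)) = aeval x (derivative (hermite m)) := by
  rw [Hr, Polynomial.derivative_map]
  simp [aeval_def, eval₂_map, RingHom.id_comp]

lemma deriv_pOrtho (m : ℕ) (x : ℝ) :
    deriv (pOrtho m) x
      = aeval x (derivative (Hr m)) / Real.sqrt (Real.sqrt (2 * π) * (m ! : ℝ)) := by
  have h : pOrtho m
      = fun y : ℝ => aeval y (hermite m) / Real.sqrt (Real.sqrt (2 * π) * (m ! : ℝ)) := rfl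
  rw [h, deriv_div_const, Polynomial.deriv_aeval, aeval_derivative_Hr]

lemma fac_pos_r (m : ℕ) : (0:ℝ) < (m ! : ℝ) := by exact_mod_cast m.factorial_pos

lemma sqrt2pi_pos : (0:ℝ) < Real.sqrt (2 * π) := Real.sqrt_pos.2 (by positivity)

lemma const_eq (N : ℕ) (hN : 1 ≤ N) :
    Real.sqrt (Real.sqrt (2 * π) * (N ! : ℝ)) * Real.sqrt (Real.sqrt (2 * π) * ((N - 1)! : ℝ))
      = Real.sqrt (2 * π) * ((N - 1)! : ℝ) * Real.sqrt N := by
  have h2π : (0:ℝ) ≤ 2 * π := by positivity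
  have hfac : (N ! : ℝ) = (N : ℝ) * ((N - 1)! : ℝ) := by
    rw [← Nat.mul_factorial_pred (by omega : N ≠ 0)]; push_cast; ring
  rw [← Real.sqrt_mul (by positivity)]
  have e2 : Real.sqrt (N : ℝ) ^ 2 = (N : ℝ) := Real.sq_sqrt (Nat.cast_nonneg N)
  rw [show Real.sqrt (2 * π) * (N ! : ℝ) * (Real.sqrt (2 * π) * ((N - 1)! : ℝ))
      = (Real.sqrt (2 * π) * ((N - 1)! : ℝ) * Real.sqrt N) ^ 2 by
    rw [hfac]
    linear_combination (-(Real.sqrt (2 * π) ^ 2 * ((N - 1)! : ℝ) ^ 2)) * e2]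
  exact Real.sqrt_sq (by positivity)

lemma gueDensity_eq (N : ℕ) (hN : 1 ≤ N) (x : ℝ) :
    gueDensity N x = (1 / (Real.sqrt (2 * π) * ((N - 1)! : ℝ))) * G (Sp (N - 1)) x := by
  have hn : N - 1 + 1 = N := Nat.succ_pred_eq_of_pos hN
  have hsq : (0:ℝ) < Real.sqrt N := Real.sqrt_pos.2 (by exact_mod_cast hN)
  have hc1 : (0:ℝ) < Real.sqrt (Real.sqrt (2 * π) * (N ! : ℝ)) :=
    Real.sqrt_pos.2 (mul_pos sqrt2pi_pos (fac_pos_r N))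
  have hc2 : (0:ℝ) < Real.sqrt (Real.sqrt (2 * π) * ((N - 1)! : ℝ)) :=
    Real.sqrt_pos.2 (mul_pos sqrt2pi_pos (fac_pos_r (N - 1)))
  have haev : aeval x (Sp (N - 1))
      = aeval x (derivative (Hr N)) * aeval x (Hr (N - 1))
        - aeval x (Hr N) * aeval x (derivative (Hr (N - 1))) := by
    rw [Sp_eq (N - 1), hn, map_sub, map_mul, map_mul]
  rw [gueDensity, deriv_pOrtho, deriv_pOrtho, pOrtho, pOrtho, G, haev,
    aeval_derivative_Hr, aeval_derivative_Hr, aeval_Hr, aeval_Hr]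
  have key : ∀ a f s c1 c2 E d1 h1 h2 d2 : ℝ, c1 * c2 = a * f * s → a ≠ 0 → f ≠ 0 →
      c1 ≠ 0 → c2 ≠ 0 →
      s * E * (d1 / c1 * (h1 / c2) - h2 / c1 * (d2 / c2))
        = 1 / (a * f) * (E * (d1 * h1 - h2 * d2)) := by
    intro a f s c1 c2 E d1 h1 h2 d2 hc ha hf h1c h2c
    field_simp
    linear_combination (E * (h2 * d2 - d1 * h1)) * hc
  exact key _ _ _ _ _ _ _ _ _ _ (const_eq N hN) sqrt2pi_pos.ne' (fac_pos_r (N - 1)).ne'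
    hc1.ne' hc2.ne'

lemma gueMoment_eq (N : ℕ) (hN : 1 ≤ N) (k : ℕ) :
    gueMoment N k
      = (1 / (Real.sqrt (2 * π) * ((N - 1)! : ℝ))) * I (X ^ (2 * k) * Sp (N - 1)) := by
  rw [gueMoment]
  have h : ∀ x : ℝ, x ^ (2 * k) * gueDensity N x
      = (1 / (Real.sqrt (2 * π) * ((N - 1)! : ℝ))) * G (X ^ (2 * k) * Sp (N - 1)) x := by
    intro x
    rw [gueDensity_eq N hN x, G, G, map_mul, aeval_X_pow]
    ring
  simp_rw [h]
  rw [integral_const_mul]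
  rfl

lemma gueMoment_zero (N : ℕ) (hN : 1 ≤ N) : gueMoment N 0 = N := by
  have hn : N - 1 + 1 = N := Nat.succ_pred_eq_of_pos hN
  have hfac : (N ! : ℝ) = (N : ℝ) * ((N - 1)! : ℝ) := by
    rw [← Nat.mul_factorial_pred (by omega : N ≠ 0)]; push_cast; ring
  rw [gueMoment_eq N hN 0, show 2 * 0 = 0 from rfl, pow_zero, one_mul, I_Sp, hn, hfac]
  have h1 : ((N - 1)! : ℝ) ≠ 0 := (fac_pos_r (N - 1)).ne'
  have h2 : Real.sqrt (2 * π) ≠ 0 := sqrt2pi_pos.ne'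
  field_simp

lemma J2_eq (n : ℕ) : I (X ^ 2 * Sp n) = ((n:ℝ) + 1) * I (X ^ 0 * Sp n) := by
  have hS : gd (gd (gd (Sp n)))
      = X ^ 2 * gd (Sp n) - C (4 * (n:ℝ) + 4) * gd (Sp n) - X * Sp n := by
    linear_combination (ode n)
  have h1 : I (X ^ 1 * gd (gd (gd (Sp n)))) = -(1:ℝ) * I (X ^ 0 * gd (gd (Sp n))) := by
    have := I_ibp 0 (gd (gd (Sp n)))
    rw [show (0:ℕ) + 1 = 1 from rfl] at this
    rw [this]; norm_num
  have h0 : I (X ^ 0 * gd (gd (Sp n))) = 0 := by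
    rw [pow_zero, one_mul, I_gd]
  have hpoly : X ^ 1 * gd (gd (gd (Sp n)))
      = X ^ 3 * gd (Sp n) - C (4 * (n:ℝ) + 4) * (X ^ 1 * gd (Sp n)) - X ^ 2 * Sp n := by
    rw [hS]; ring
  have h3 : I (X ^ 3 * gd (Sp n)) = -(3:ℝ) * I (X ^ 2 * Sp n) := by
    have := I_ibp 2 (Sp n)
    rw [show (2:ℕ) + 1 = 3 from rfl] at this
    rw [this]; norm_num
  have h4 : I (X ^ 1 * gd (Sp n)) = -(1:ℝ) * I (X ^ 0 * Sp n) := by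
    have := I_ibp 0 (Sp n)
    rw [show (0:ℕ) + 1 = 1 from rfl] at this
    rw [this]; norm_num
  have h6 : I (X ^ 1 * gd (gd (gd (Sp n))))
      = I (X ^ 3 * gd (Sp n)) - (4 * (n:ℝ) + 4) * I (X ^ 1 * gd (Sp n))
        - I (X ^ 2 * Sp n) := by
    rw [hpoly, I_sub, I_sub, I_C_mul]
  rw [h1, h0, h3, h4] at h6
  linarith

lemma J_rec (n q : ℕ) :
    (2 * (q:ℝ) + 6) * I (X ^ (2 * q + 4) * Sp n)
      = (4 * (n:ℝ) + 4) * (2 * (q:ℝ) + 3) * I (X ^ (2 * q + 2) * Sp n)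
        + (2 * (q:ℝ) + 3) * (2 * (q:ℝ) + 2) * (2 * (q:ℝ) + 1) * I (X ^ (2 * q) * Sp n) := by
  have hS : gd (gd (gd (Sp n)))
      = X ^ 2 * gd (Sp n) - C (4 * (n:ℝ) + 4) * gd (Sp n) - X * Sp n := by
    linear_combination (ode n)
  have h1 : I (X ^ (2 * q + 3) * gd (gd (gd (Sp n))))
      = -((2 * (q:ℝ) + 2) + 1) * I (X ^ (2 * q + 2) * gd (gd (Sp n))) := by
    have := I_ibp (2 * q + 2) (gd (gd (Sp n)))
    rw [show 2 * q + 2 + 1 = 2 * q + 3 by omega] at this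
    rw [this]; push_cast; ring
  have h2 : I (X ^ (2 * q + 2) * gd (gd (Sp n)))
      = -((2 * (q:ℝ) + 1) + 1) * I (X ^ (2 * q + 1) * gd (Sp n)) := by
    have := I_ibp (2 * q + 1) (gd (Sp n))
    rw [show 2 * q + 1 + 1 = 2 * q + 2 by omega] at this
    rw [this]; push_cast; ring
  have h3 : I (X ^ (2 * q + 1) * gd (Sp n))
      = -((2 * (q:ℝ)) + 1) * I (X ^ (2 * q) * Sp n) := by
    have := I_ibp (2 * q) (Sp n)
    rw [this]; push_cast; ring
  have h4 : I (X ^ (2 * q + 5) * gd (Sp n))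
      = -((2 * (q:ℝ) + 4) + 1) * I (X ^ (2 * q + 4) * Sp n) := by
    have := I_ibp (2 * q + 4) (Sp n)
    rw [show 2 * q + 4 + 1 = 2 * q + 5 by omega] at this
    rw [this]; push_cast; ring
  have h5 : I (X ^ (2 * q + 3) * gd (Sp n))
      = -((2 * (q:ℝ) + 2) + 1) * I (X ^ (2 * q + 2) * Sp n) := by
    have := I_ibp (2 * q + 2) (Sp n)
    rw [show 2 * q + 2 + 1 = 2 * q + 3 by omega] at this
    rw [this]; push_cast; ring
  have hpoly : X ^ (2 * q + 3) * gd (gd (gd (Sp n)))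
      = X ^ (2 * q + 5) * gd (Sp n) - C (4 * (n:ℝ) + 4) * (X ^ (2 * q + 3) * gd (Sp n))
        - X ^ (2 * q + 4) * Sp n := by
    rw [hS]; ring
  have h6 : I (X ^ (2 * q + 3) * gd (gd (gd (Sp n))))
      = I (X ^ (2 * q + 5) * gd (Sp n))
        - (4 * (n:ℝ) + 4) * I (X ^ (2 * q + 3) * gd (Sp n))
        - I (X ^ (2 * q + 4) * Sp n) := by
    rw [hpoly, I_sub, I_sub, I_C_mul]
  rw [h1, h2, h3] at h6
  rw [h4, h5] at h6
  linarith [h6]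

end HZ

/-- The even GUE moments satisfy `m_0 = N`, `m_2 = N²`, and the Harer–Zagier
three term recurrence
`(p+1)m_{2p} = (4p−2)N·m_{2p−2} + (p−1)(2p−1)(2p−3)m_{2p−4}`. -/
theorem gueMoment_recurrence (N : ℕ) (hN : 1 ≤ N) :
    gueMoment N 0 = N ∧ gueMoment N 1 = (N : ℝ) ^ 2 ∧
    ∀ p : ℕ, 2 ≤ p →
      ((p : ℝ) + 1) * gueMoment N p =
        (4 * (p : ℝ) - 2) * (N : ℝ) * gueMoment N (p - 1) +
          ((p : ℝ) - 1) * (2 * (p : ℝ) - 1) * (2 * (p : ℝ) - 3) * gueMoment N (p - 2) := by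
  have hn : N - 1 + 1 = N := Nat.succ_pred_eq_of_pos hN
  have hNr : ((N - 1 : ℕ) : ℝ) + 1 = (N : ℝ) := by exact_mod_cast congrArg Nat.cast hn
  have h0 : gueMoment N 0 = N := HZ.gueMoment_zero N hN
  refine ⟨h0, ?_, ?_⟩
  · rw [HZ.gueMoment_eq N hN 1, show 2 * 1 = 2 from rfl, HZ.J2_eq (N - 1), hNr]
    have h0' := HZ.gueMoment_eq N hN 0
    rw [show 2 * 0 = 0 from rfl] at h0'
    rw [h0, ] at h0'
    rw [show (1 / (Real.sqrt (2 * Real.pi) * ((N - 1)! : ℝ))) *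
        ((N:ℝ) * HZ.I (Polynomial.X ^ 0 * HZ.Sp (N - 1)))
      = (N:ℝ) * ((1 / (Real.sqrt (2 * Real.pi) * ((N - 1)! : ℝ))) *
        HZ.I (Polynomial.X ^ 0 * HZ.Sp (N - 1))) by ring, ← h0']
    ring
  · intro p hp
    obtain ⟨q, rfl⟩ : ∃ q, p = q + 2 := ⟨p - 2, by omega⟩
    rw [show q + 2 - 1 = q + 1 from rfl, show q + 2 - 2 = q from rfl]
    rw [HZ.gueMoment_eq N hN (q + 2), HZ.gueMoment_eq N hN (q + 1), HZ.gueMoment_eq N hN q]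
    rw [show 2 * (q + 2) = 2 * q + 4 by omega, show 2 * (q + 1) = 2 * q + 2 by omega]
    have hrec := HZ.J_rec (N - 1) q
    have h4N : (4 * ((N - 1 : ℕ) : ℝ) + 4) = 4 * (N : ℝ) := by
      rw [← hNr]; ring
    rw [h4N] at hrec
    push_cast
    linear_combination (1 / (2 * (Real.sqrt (2 * Real.pi) * ((N - 1)! : ℝ)))) * hrec
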